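/- Let α ∈ ℝ, and define x(ξ,η) = (√(ξ² + α) + √(η² + α))/(η − ξ), y(ξ,η) = (η·√(ξ² + α) + ξ·√(η² + α))/(η − ξ), and μ(ξ,η) = log((√(ξ² + α)·√(η² + α) + ξη + α)/(η − ξ)) on the domain {(ξ,η) ∈ ℝ² : η > ξ, ξ² + α > 0, η² + α > 0, and √(ξ² + α)·√(η² + α) + ξη + α > 0}. Then x, y, μ satisfy the twistor compatibility system at every point of this domain, i.e. x_{ξη} = μ_ξ·x_η + μ_η·x_ξ and y_{ξη} = μ_ξ·y_η + μ_η·y_ξ. -/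

import Mathlib

set_option maxHeartbeats 1000000

private theorem sqrt_deriv (α t : ℝ) (ht : 0 < t^2 + α) :
    HasDerivAt (fun u => Real.sqrt (u^2 + α)) (t / Real.sqrt (t^2 + α)) t := by
  have h1 : HasDerivAt (fun u : ℝ => u^2 + α) (2*t) t := by
    simpa using (hasDerivAt_pow 2 t).add_const α
  have h2 := h1.sqrt (ne_of_gt ht)
  convert h2 using 1
  rw [mul_div_mul_left _ _ (two_ne_zero)]


/-- the general one-parameter family (with `R(z) = z² + α`)
`x = (√R(ξ) + √R(η))/(η − ξ)`, `y = (η√R(ξ) + ξ√R(η))/(η − ξ)`,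
`μ = log ((√R(ξ)√R(η) + ξη + α)/(η − ξ))` satisfies the twistor compatibility
system on its natural domain. -/
theorem stmt_7 (α : ℝ) (x y μ : ℝ → ℝ → ℝ)
    (hx : x = fun ξ η => (Real.sqrt (ξ ^ 2 + α) + Real.sqrt (η ^ 2 + α)) / (η - ξ))
    (hy : y = fun ξ η =>
      (η * Real.sqrt (ξ ^ 2 + α) + ξ * Real.sqrt (η ^ 2 + α)) / (η - ξ))
    (hμ : μ = fun ξ η =>
      Real.log ((Real.sqrt (ξ ^ 2 + α) * Real.sqrt (η ^ 2 + α) + ξ * η + α) / (η - ξ))) :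
    ∀ ξ η : ℝ, ξ < η → 0 < ξ ^ 2 + α → 0 < η ^ 2 + α →
      0 < Real.sqrt (ξ ^ 2 + α) * Real.sqrt (η ^ 2 + α) + ξ * η + α →
      (deriv (fun s => deriv (fun t => x t s) ξ) η
          = deriv (fun t => μ t η) ξ * deriv (fun s => x ξ s) η
            + deriv (fun s => μ ξ s) η * deriv (fun t => x t η) ξ) ∧
      (deriv (fun s => deriv (fun t => y t s) ξ) η
          = deriv (fun t => μ t η) ξ * deriv (fun s => y ξ s) η
            + deriv (fun s => μ ξ s) η * deriv (fun t => y t η) ξ) := by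
  subst hx hy hμ
  intro ξ η hlt hRξ hRη hN
  set a := Real.sqrt (ξ^2 + α) with ha
  set b := Real.sqrt (η^2 + α) with hb
  have ha0 : 0 < a := Real.sqrt_pos.mpr hRξ
  have hb0 : 0 < b := Real.sqrt_pos.mpr hRη
  have hd0 : (0:ℝ) < η - ξ := sub_pos.mpr hlt
  have hdne : η - ξ ≠ 0 := ne_of_gt hd0
  have ha2 : a^2 = ξ^2 + α := Real.sq_sqrt hRξ.le
  have hb2 : b^2 = η^2 + α := Real.sq_sqrt hRη.le
  have hda : HasDerivAt (fun t => Real.sqrt (t^2 + α)) (ξ / a) ξ := sqrt_deriv α ξ hRξ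
  have hdb : HasDerivAt (fun s => Real.sqrt (s^2 + α)) (η / b) η := sqrt_deriv α η hRη
  -- μ derivatives
  have hNd : (a * b + ξ * η + α) / (η - ξ) ≠ 0 := ne_of_gt (div_pos hN hd0)
  have hμ1 : deriv (fun t => Real.log ((Real.sqrt (t^2+α) * b + t * η + α) / (η - t))) ξ
      = ((((ξ/a) * b + 1 * η) * (η - ξ) - (a * b + ξ * η + α) * (-1)) / (η - ξ)^2)
        / ((a * b + ξ * η + α) / (η - ξ)) := by
    have hnum : HasDerivAt (fun t => Real.sqrt (t^2+α) * b + t * η + α)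
        ((ξ/a) * b + 1 * η) ξ :=
      ((hda.mul_const b).add ((hasDerivAt_id ξ).mul_const η)).add_const α
    have hden : HasDerivAt (fun t : ℝ => η - t) (-1) ξ := by
      simpa using (hasDerivAt_id ξ).const_sub η
    exact ((hnum.div hden hdne).log hNd).deriv
  have hμ2 : deriv (fun s => Real.log ((a * Real.sqrt (s^2+α) + ξ * s + α) / (s - ξ))) η
      = (((a * (η/b) + ξ * 1) * (η - ξ) - (a * b + ξ * η + α) * 1) / (η - ξ)^2)
        / ((a * b + ξ * η + α) / (η - ξ)) := by
    have hnum : HasDerivAt (fun s => a * Real.sqrt (s^2+α) + ξ * s + α)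
        (a * (η/b) + ξ * 1) η :=
      ((hdb.const_mul a).add ((hasDerivAt_id η).const_mul ξ)).add_const α
    have hden : HasDerivAt (fun s : ℝ => s - ξ) 1 η := (hasDerivAt_id η).sub_const ξ
    exact ((hnum.div hden hdne).log hNd).deriv
  -- x first-variable derivative, at a general second argument s > ξ
  have hx1 : ∀ s : ℝ, ξ < s → deriv (fun t => (Real.sqrt (t^2+α) + Real.sqrt (s^2+α)) / (s - t)) ξ
      = ((ξ/a) * (s - ξ) - (a + Real.sqrt (s^2+α)) * (-1)) / (s - ξ)^2 := by
    intro s hs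
    have hsne : s - ξ ≠ 0 := ne_of_gt (sub_pos.mpr hs)
    have hnum : HasDerivAt (fun t => Real.sqrt (t^2+α) + Real.sqrt (s^2+α)) (ξ/a) ξ :=
      hda.add_const _
    have hden : HasDerivAt (fun t : ℝ => s - t) (-1) ξ := by
      simpa using (hasDerivAt_id ξ).const_sub s
    exact (hnum.div hden hsne).deriv
  -- derivative of the inner-derivative formula for x
  have hx12 : deriv (fun s => deriv (fun t => (Real.sqrt (t^2+α) + Real.sqrt (s^2+α)) / (s - t)) ξ) η
      = (((ξ/a) * 1 - (η/b) * (-1)) * (η-ξ)^2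
          - ((ξ/a) * (η - ξ) - (a + b) * (-1)) * (↑2 * (η-ξ)^1 * 1)) / ((η-ξ)^2)^2 := by
    have hev : (fun s => deriv (fun t => (Real.sqrt (t^2+α) + Real.sqrt (s^2+α)) / (s - t)) ξ)
        =ᶠ[nhds η] (fun s => ((ξ/a) * (s - ξ) - (a + Real.sqrt (s^2+α)) * (-1)) / (s - ξ)^2) := by
      filter_upwards [eventually_gt_nhds hlt] with s hs
      exact hx1 s hs
    rw [hev.deriv_eq]
    have hnum : HasDerivAt (fun s => (ξ/a) * (s - ξ) - (a + Real.sqrt (s^2+α)) * (-1))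
        ((ξ/a) * 1 - (η/b) * (-1)) η := by
      have h1 : HasDerivAt (fun s : ℝ => (ξ/a) * (s - ξ)) ((ξ/a) * 1) η :=
        ((hasDerivAt_id η).sub_const ξ).const_mul (ξ/a)
      have h2 : HasDerivAt (fun s => (a + Real.sqrt (s^2+α)) * (-1)) ((η/b) * (-1)) η :=
        (hdb.const_add a).mul_const (-1)
      exact h1.sub h2
    have hden : HasDerivAt (fun s : ℝ => (s - ξ)^2) (↑2 * (η-ξ)^1 * 1) η :=
      ((hasDerivAt_id η).sub_const ξ).pow 2
    have hd2ne : (η - ξ)^2 ≠ 0 := pow_ne_zero 2 hdne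
    exact (hnum.div hden hd2ne).deriv
  -- x second-variable derivative
  have hx2 : deriv (fun s => (a + Real.sqrt (s^2+α)) / (s - ξ)) η
      = ((η/b) * (η - ξ) - (a + b) * 1) / (η - ξ)^2 := by
    have hnum : HasDerivAt (fun s => a + Real.sqrt (s^2+α)) (η/b) η := hdb.const_add a
    have hden : HasDerivAt (fun s : ℝ => s - ξ) 1 η := (hasDerivAt_id η).sub_const ξ
    exact (hnum.div hden hdne).deriv
  -- y first-variable derivative at general s > ξ
  have hy1 : ∀ s : ℝ, ξ < s →
      deriv (fun t => (s * Real.sqrt (t^2+α) + t * Real.sqrt (s^2+α)) / (s - t)) ξ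
      = ((s * (ξ/a) + 1 * Real.sqrt (s^2+α)) * (s - ξ)
          - (s * a + ξ * Real.sqrt (s^2+α)) * (-1)) / (s - ξ)^2 := by
    intro s hs
    have hsne : s - ξ ≠ 0 := ne_of_gt (sub_pos.mpr hs)
    have hnum : HasDerivAt (fun t => s * Real.sqrt (t^2+α) + t * Real.sqrt (s^2+α))
        (s * (ξ/a) + 1 * Real.sqrt (s^2+α)) ξ :=
      (hda.const_mul s).add ((hasDerivAt_id ξ).mul_const _)
    have hden : HasDerivAt (fun t : ℝ => s - t) (-1) ξ := by
      simpa using (hasDerivAt_id ξ).const_sub s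
    exact (hnum.div hden hsne).deriv
  have hy12 : deriv (fun s =>
        deriv (fun t => (s * Real.sqrt (t^2+α) + t * Real.sqrt (s^2+α)) / (s - t)) ξ) η
      = (((1 * (ξ/a) + (η/b)) * (η - ξ) + (η * (ξ/a) + 1 * b) * 1
            - (1 * a + ξ * (η/b)) * (-1)) * (η-ξ)^2
          - ((η * (ξ/a) + 1 * b) * (η - ξ) - (η * a + ξ * b) * (-1)) * (↑2 * (η-ξ)^1 * 1))
        / ((η-ξ)^2)^2 := by
    have hev : (fun s =>
          deriv (fun t => (s * Real.sqrt (t^2+α) + t * Real.sqrt (s^2+α)) / (s - t)) ξ)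
        =ᶠ[nhds η] (fun s => ((s * (ξ/a) + 1 * Real.sqrt (s^2+α)) * (s - ξ)
          - (s * a + ξ * Real.sqrt (s^2+α)) * (-1)) / (s - ξ)^2) := by
      filter_upwards [eventually_gt_nhds hlt] with s hs
      exact hy1 s hs
    rw [hev.deriv_eq]
    have hf : HasDerivAt (fun s => s * (ξ/a) + 1 * Real.sqrt (s^2+α))
        (1 * (ξ/a) + (η/b)) η := by
      have := ((hasDerivAt_id η).mul_const (ξ/a)).add (hdb.const_mul 1)
      convert this using 1
      · rfl
      · rfl
      · rfl
      · ring
    have h1 : HasDerivAt (fun s => (s * (ξ/a) + 1 * Real.sqrt (s^2+α)) * (s - ξ))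
        ((1 * (ξ/a) + (η/b)) * (η - ξ) + (η * (ξ/a) + 1 * b) * 1) η :=
      hf.mul ((hasDerivAt_id η).sub_const ξ)
    have h2 : HasDerivAt (fun s => (s * a + ξ * Real.sqrt (s^2+α)) * (-1))
        ((1 * a + ξ * (η/b)) * (-1)) η :=
      (((hasDerivAt_id η).mul_const a).add (hdb.const_mul ξ)).mul_const (-1)
    have hnum := h1.sub h2
    have hden : HasDerivAt (fun s : ℝ => (s - ξ)^2) (↑2 * (η-ξ)^1 * 1) η :=
      ((hasDerivAt_id η).sub_const ξ).pow 2
    have hd2ne : (η - ξ)^2 ≠ 0 := pow_ne_zero 2 hdne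
    exact (hnum.div hden hd2ne).deriv
  -- y second-variable derivative
  have hy2 : deriv (fun s => (s * a + ξ * Real.sqrt (s^2+α)) / (s - ξ)) η
      = ((1 * a + ξ * (η/b)) * (η - ξ) - (η * a + ξ * b) * 1) / (η - ξ)^2 := by
    have hnum : HasDerivAt (fun s => s * a + ξ * Real.sqrt (s^2+α))
        (1 * a + ξ * (η/b)) η :=
      ((hasDerivAt_id η).mul_const a).add (hdb.const_mul ξ)
    have hden : HasDerivAt (fun s : ℝ => s - ξ) 1 η := (hasDerivAt_id η).sub_const ξ
    exact (hnum.div hden hdne).deriv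
  have hNne : a * b + ξ * η + α ≠ 0 := ne_of_gt hN
  have cM1 : ((((ξ/a) * b + 1 * η) * (η - ξ) - (a * b + ξ * η + α) * (-1)) / (η - ξ)^2)
        / ((a * b + ξ * η + α) / (η - ξ)) = b / (a * (η - ξ)) := by
    field_simp
    linear_combination b * ha2 - a * hb2
  have cM2 : (((a * (η/b) + ξ * 1) * (η - ξ) - (a * b + ξ * η + α) * 1) / (η - ξ)^2)
        / ((a * b + ξ * η + α) / (η - ξ)) = -(a / (b * (η - ξ))) := by
    field_simp
    rw [div_eq_iff (ne_of_gt (by linarith))]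
    linear_combination b * ha2 - a * hb2
  have cX1 : ((ξ/a) * (η - ξ) - (a + b) * (-1)) / (η - ξ)^2
      = (ξ*(η-ξ) + a*(a+b)) / (a*(η-ξ)^2) := by
    field_simp
    ring
  have cX2 : ((η/b) * (η - ξ) - (a + b) * 1) / (η - ξ)^2
      = (η*(η-ξ) - b*(a+b)) / (b*(η-ξ)^2) := by
    field_simp
  have cX12 : (((ξ/a) * 1 - (η/b) * (-1)) * (η-ξ)^2
          - ((ξ/a) * (η - ξ) - (a + b) * (-1)) * (↑2 * (η-ξ)^1 * 1)) / ((η-ξ)^2)^2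
      = (-(ξ*b*(η-ξ)) + η*a*(η-ξ) - 2*a*b*(a+b)) / (a*b*(η-ξ)^3) := by
    field_simp
    ring
  have cY1 : ((η * (ξ/a) + 1 * b) * (η - ξ) - (η * a + ξ * b) * (-1)) / (η - ξ)^2
      = ((η*ξ+a*b)*(η-ξ) + a*(η*a+ξ*b)) / (a*(η-ξ)^2) := by
    field_simp
    ring
  have cY2 : ((1 * a + ξ * (η/b)) * (η - ξ) - (η * a + ξ * b) * 1) / (η - ξ)^2
      = ((a*b+ξ*η)*(η-ξ) - b*(η*a+ξ*b)) / (b*(η-ξ)^2) := by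
    field_simp
  have cY12 : (((1 * (ξ/a) + (η/b)) * (η - ξ) + (η * (ξ/a) + 1 * b) * 1
            - (1 * a + ξ * (η/b)) * (-1)) * (η-ξ)^2
          - ((η * (ξ/a) + 1 * b) * (η - ξ) - (η * a + ξ * b) * (-1)) * (↑2 * (η-ξ)^1 * 1))
        / ((η-ξ)^2)^2
      = ((ξ*b+η*a)*(η-ξ)^2 - (η*ξ+a*b)*b*(η-ξ) + (a*b+ξ*η)*a*(η-ξ) - 2*a*b*(η*a+ξ*b)) / (a*b*(η-ξ)^3) := by
    field_simp
    ring
  have hab : b^2 - a^2 = η^2 - ξ^2 := by rw [ha2, hb2]; ring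
  constructor
  · rw [hx12, hμ1, hx2, hμ2, hx1 η hlt, cM1, cM2, cX1, cX2, cX12]
    field_simp
    linear_combination (a - b) * ha2 - (a - b) * hb2
  · rw [hy12, hμ1, hy2, hμ2, hy1 η hlt, cM1, cM2, cY1, cY2, cY12]
    field_simp
    linear_combination (η * a - ξ * b) * ha2 - (η * a - ξ * b) * hb2
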